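/- If A and B are complex Hadamard matrices of order n, then the block matrix [[A, D B],[A, -D B]] is a complex Hadamard matrix of order 2n for any diagonal unitary matrix D with unimodular diagonal entries. -/

import Mathlib

open Complex Finset

/-- A complex Hadamard matrix (over an arbitrary finite index type):
unimodular entries and pairwise orthogonal columns. -/
def IsCHM {I : Type} [Fintype I] (H : Matrix I I ℂ) : Prop :=
  (∀ i j, ‖H i j‖ = 1) ∧
  ∀ j k, j ≠ k → ∑ i, (starRingEnd ℂ) (H i j) * H i k = 0

/-- if `A`, `B` are complex Hadamard matrices of order `n` and `D` is a
diagonal unitary matrix with unimodular diagonal entries, then the block matrix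
`[[A, DB], [A, -DB]]` is a complex Hadamard matrix of order `2n`. -/
theorem dita_block_construction (n : ℕ)
    (A B : Matrix (Fin n) (Fin n) ℂ) (hA : IsCHM A) (hB : IsCHM B)
    (D : Fin n → ℂ) (hD : ∀ i, ‖D i‖ = 1)
    (M : Matrix (Bool × Fin n) (Bool × Fin n) ℂ)
    (hM : ∀ (b : Bool) (i : Fin n) (c : Bool) (j : Fin n),
      M (b, i) (c, j) =
        if c = false then A i j
        else if b = false then D i * B i j else -(D i * B i j)) :
    IsCHM M := by
  have hDc : ∀ i, (starRingEnd ℂ) (D i) * D i = 1 := by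
    intro i
    have h1 : Complex.normSq (D i) = 1 := by
      rw [← Complex.sq_norm, hD]; norm_num
    rw [← Complex.normSq_eq_conj_mul_self, h1, Complex.ofReal_one]
  constructor
  · rintro ⟨b, i⟩ ⟨c, j⟩
    rw [hM]
    split_ifs with h1 h2 <;> simp [map_mul, hA.1, hB.1, hD]
  · rintro ⟨c, j⟩ ⟨c', k⟩ hne
    rw [Fintype.sum_prod_type, Fintype.sum_bool]
    simp only [hM]
    cases c <;> cases c' <;> simp only [if_pos, if_neg, Bool.true_eq_false,
      not_false_iff, ite_true, ite_false, reduceIte]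
    · -- both columns in A block
      have hjk : j ≠ k := by
        intro h; exact hne (by rw [h])
      have h0 := hA.2 j k hjk
      rw [h0]; ring
    · -- A block vs DB block
      rw [← Finset.sum_add_distrib]
      apply Finset.sum_eq_zero
      intro i _; ring
    · -- DB block vs A block
      rw [← Finset.sum_add_distrib]
      apply Finset.sum_eq_zero
      intro i _; rw [map_neg]; ring
    · -- both columns in DB block
      have hjk : j ≠ k := by
        intro h; exact hne (by rw [h])
      have key : ∀ i, (starRingEnd ℂ) (D i * B i j) * (D i * B i k)
          = (starRingEnd ℂ) (B i j) * B i k := by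
        intro i
        rw [map_mul]
        calc (starRingEnd ℂ) (D i) * (starRingEnd ℂ) (B i j) * (D i * B i k)
            = ((starRingEnd ℂ) (D i) * D i) * ((starRingEnd ℂ) (B i j) * B i k) := by ring
          _ = (starRingEnd ℂ) (B i j) * B i k := by rw [hDc]; ring
      have h0 := hB.2 j k hjk
      calc (∑ i, (starRingEnd ℂ) (-(D i * B i j)) * -(D i * B i k))
            + ∑ i, (starRingEnd ℂ) (D i * B i j) * (D i * B i k)
          = (∑ i, (starRingEnd ℂ) (B i j) * B i k)
            + ∑ i, (starRingEnd ℂ) (B i j) * B i k := by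
            congr 1 <;> apply Finset.sum_congr rfl <;> intro i _
            · rw [map_neg, neg_mul_neg, key]
            · rw [key]
        _ = 0 := by rw [h0]; ring
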